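/- Let $0 < a_n \le a_{n+1}$, $x > 0$ with $x/a_n < 2$ for $n > N$, define $\kappa_n \in (0,\pi/2)$ by $x/a_n = 2\cos\kappa_n$ (so $\kappa_n \le \kappa_{n+1}$ and $a_n/a_{n+1} = \cos\kappa_{n+1}/\cos\kappa_n$). Let $p_n$ be real, satisfying $p_{n+1} = \frac{x}{a_{n+1}} p_n - \frac{a_n}{a_{n+1}} p_{n-1}$, and set $\Phi_n = p_n - e^{-i\kappa_n}p_{n-1}$. Then $\frac{|\Phi_{n+1}|}{|\Phi_n|} \le 1 + \frac{|\kappa_{n+1}-\kappa_n|}{\frac{1}{2}\sin(2\kappa_n)}$ (when $\Phi_n \ne 0$). -/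

import Mathlib

theorem stmt_13 (a κ p : ℤ → ℝ) (Φ : ℤ → ℂ) (N : ℤ) (x : ℝ)
    (ha0 : ∀ n : ℤ, 0 < a n) (hamono : ∀ n : ℤ, a n ≤ a (n + 1))
    (hx : 0 < x)
    (hosc : ∀ n > N, x / a n < 2)
    (hκ : ∀ n > N, 0 < κ n ∧ κ n < Real.pi / 2 ∧ x / a n = 2 * Real.cos (κ n))
    (hrec : ∀ n : ℤ, p (n + 1) = x / a (n + 1) * p n - a n / a (n + 1) * p (n - 1))
    (hΦ : ∀ n > N, Φ n = (p n : ℂ) - Complex.exp (-(κ n : ℂ) * Complex.I) * (p (n - 1) : ℂ)) :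
    ∀ n > N, Φ n ≠ 0 →
      ‖Φ (n + 1)‖ / ‖Φ n‖ ≤
        1 + |κ (n + 1) - κ n| / (1 / 2 * Real.sin (2 * κ n)) := by
  intro n hn hΦn
  obtain ⟨hk0, hkpi, hkx⟩ := hκ n hn
  obtain ⟨hk0', hkpi', hkx'⟩ := hκ (n + 1) (by linarith)
  set k := κ n with hkdef
  set k' := κ (n + 1) with hk'def
  set q := p (n - 1) with hqdef
  have hcos : 0 < Real.cos k := Real.cos_pos_of_mem_Ioo ⟨by linarith [Real.pi_pos], hkpi⟩
  have hcos' : 0 < Real.cos k' := Real.cos_pos_of_mem_Ioo ⟨by linarith [Real.pi_pos], hkpi'⟩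
  have hsin : 0 < Real.sin k := Real.sin_pos_of_pos_of_lt_pi hk0 (by linarith [Real.pi_pos])
  have han := ha0 n
  have han1 := ha0 (n + 1)
  -- ratio identity
  have hr : a n / a (n + 1) = Real.cos k' / Real.cos k := by
    have h1 : x = 2 * Real.cos k * a n := by
      field_simp at hkx; linarith [hkx]
    have h2 : x = 2 * Real.cos k' * a (n + 1) := by
      field_simp at hkx'; linarith [hkx']
    rw [div_eq_div_iff han1.ne' hcos.ne']
    nlinarith [h1, h2]
  have hx' : x / a (n + 1) = 2 * Real.cos k' := hkx'
  -- expressions for Φ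
  have eexp : ∀ t : ℝ, Complex.exp (-(t : ℂ) * Complex.I) =
      (Real.cos t : ℂ) - (Real.sin t : ℂ) * Complex.I := by
    intro t
    rw [Complex.exp_mul_I]
    simp [← Complex.ofReal_cos, ← Complex.ofReal_sin, Real.cos_neg, Real.sin_neg]
    ring
  have hΦn_eq : Φ n = ((p n - Real.cos k * q : ℝ) : ℂ) + ((Real.sin k * q : ℝ) : ℂ) * Complex.I := by
    rw [hΦ n hn, eexp]
    push_cast
    ring
  have hΦn1_eq : Φ (n + 1) = ((p (n + 1) - Real.cos k' * p n : ℝ) : ℂ)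
      + ((Real.sin k' * p n : ℝ) : ℂ) * Complex.I := by
    have := hΦ (n + 1) (by linarith)
    rw [show n + 1 - 1 = n by ring] at this
    rw [this, eexp]
    push_cast
    ring
  -- recurrence in trig form
  have hprec : p (n + 1) = 2 * Real.cos k' * p n - Real.cos k' / Real.cos k * q := by
    rw [hrec n, hx', hr]
  -- key decomposition
  have hkey : Φ (n + 1) = Complex.exp ((k' : ℂ) * Complex.I) * Φ n
      + ((q * Real.sin (k' - k) / Real.cos k : ℝ) : ℂ)
        * ((Real.sin k : ℂ) + (Real.cos k : ℂ) * Complex.I) := by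
    rw [hΦn1_eq, hΦn_eq, hprec, Complex.exp_mul_I, ← Complex.ofReal_cos, ← Complex.ofReal_sin, Real.sin_sub]
    have hc : Complex.cos (k : ℂ) ≠ 0 := by
      rw [← Complex.ofReal_cos]; exact_mod_cast hcos.ne'
    push_cast
    field_simp
    ring_nf
    simp only [Complex.I_sq]
    linear_combination (Complex.cos (k' : ℂ) * (q : ℂ)) * Complex.sin_sq_add_cos_sq (k : ℂ)
  have hA : 0 < ‖Φ n‖ := norm_pos_iff.mpr hΦn
  have habs1 : ‖(Real.sin k : ℂ) + (Real.cos k : ℂ) * Complex.I‖ = 1 := by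
    rw [Complex.norm_def, Complex.normSq_add_mul_I]
    rw [show Real.sin k ^ 2 + Real.cos k ^ 2 = 1 from Real.sin_sq_add_cos_sq k]
    exact Real.sqrt_one
  have hD : ‖Φ (n + 1)‖ ≤ ‖Φ n‖
      + |q| * |Real.sin (k' - k)| / Real.cos k := by
    rw [hkey]
    refine le_trans (norm_add_le _ _) ?_
    rw [norm_mul, norm_mul, Complex.norm_exp_ofReal_mul_I, habs1, one_mul, mul_one,
      Complex.norm_real, Real.norm_eq_abs, abs_div, abs_mul, abs_of_pos hcos]
  have him : |q| * Real.sin k ≤ ‖Φ n‖ := by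
    have h2 : (Φ n).im = Real.sin k * q := by rw [hΦn_eq]; simp [Complex.sin_ofReal_re]
    calc |q| * Real.sin k = |(Φ n).im| := by
          rw [h2, abs_mul, abs_of_pos hsin]; ring
      _ ≤ _ := Complex.abs_im_le_norm _
  have habsq : |q| ≤ ‖Φ n‖ / Real.sin k := by
    rw [le_div_iff₀ hsin]; exact him
  have hsinb : |Real.sin (k' - k)| ≤ |k' - k| := Real.abs_sin_le_abs
  have hfinal : ‖Φ (n + 1)‖ ≤
      (1 + |k' - k| / (Real.sin k * Real.cos k)) * ‖Φ n‖ := by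
    calc ‖Φ (n + 1)‖ ≤ ‖Φ n‖
          + |q| * |Real.sin (k' - k)| / Real.cos k := hD
      _ ≤ ‖Φ n‖
          + (‖Φ n‖ / Real.sin k) * |k' - k| / Real.cos k := by
          gcongr
      _ = (1 + |k' - k| / (Real.sin k * Real.cos k)) * ‖Φ n‖ := by
          field_simp
  rw [div_le_iff₀ hA, Real.sin_two_mul,
    show (1 : ℝ) / 2 * (2 * Real.sin k * Real.cos k) = Real.sin k * Real.cos k by ring]
  exact hfinal
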